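/- arXiv:1607.07247 — 7 statements merged into one kernel-verified Lean document; each statement's English description precedes it below -/
import Mathlib

section
/- For all real numbers $w_1, w_2$ with $0 < 2w_2 < w_1$ and every $q \in [0, 1/2]$, the inequality $2w_2 - (w_1 + w_2)\, h\!\left(\frac{w_2}{w_1 + w_2}\right) + q\, w_1 < q\,(w_1 - w_2)$ holds. -/
/-- The binary entropy function in bits: `h x = -x log₂ x - (1-x) log₂ (1-x)`.
Since `Real.logb 2 0 = 0` in Mathlib, this satisfies `h 0 = h 1 = 0`. -/
noncomputable def binEntropy2 (x : ℝ) : ℝ :=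
  -x * Real.logb 2 x - (1 - x) * Real.logb 2 (1 - x)

theorem stmt_0 (w₁ w₂ q : ℝ) (hw₂ : 0 < w₂) (hw : 2 * w₂ < w₁)
    (hq0 : 0 ≤ q) (hq : q ≤ 1 / 2) :
    2 * w₂ - (w₁ + w₂) * binEntropy2 (w₂ / (w₁ + w₂)) + q * w₁ < q * (w₁ - w₂) := by
  have hs0 : 0 < w₁ + w₂ := by nlinarith
  set p : ℝ := w₂ / (w₁ + w₂) with hpdef
  have hp0 : 0 < p := div_pos hw₂ hs0
  have hp3 : p < 1 / 3 := by
    rw [hpdef, div_lt_iff₀ hs0]; nlinarith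
  have hlog2pos : 0 < Real.log 2 := Real.log_pos (by norm_num)
  have hlog2lt : Real.log 2 < 0.6931471808 := Real.log_two_lt_d9
  -- log 3 ≥ 12/11
  have hlog3 : (12 : ℝ) / 11 ≤ Real.log 3 := by
    have h11 : Real.log (10 / 11 : ℝ) ≤ 10 / 11 - 1 :=
      Real.log_le_sub_one_of_pos (by norm_num)
    have hinv : Real.log (11 / 10 : ℝ) = - Real.log (10 / 11 : ℝ) := by
      rw [← Real.log_inv]; norm_num
    have he : Real.exp 1 < 2.7182818286 := Real.exp_one_lt_d9
    have h3 : (11 / 10 : ℝ) * Real.exp 1 ≤ 3 := by nlinarith [Real.exp_pos 1]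
    have hle : Real.log ((11 / 10 : ℝ) * Real.exp 1) ≤ Real.log 3 :=
      Real.log_le_log (by positivity) h3
    rw [Real.log_mul (by norm_num) (Real.exp_ne_zero 1), Real.log_exp] at hle
    have : -(10 / 11 - 1 : ℝ) + 1 ≤ Real.log 3 := by linarith [hinv ▸ hle, h11]
    linarith
  -- log p < - log 3
  have hlp : Real.log p < - Real.log 3 := by
    have := Real.log_lt_log hp0 hp3
    rw [show (1:ℝ)/3 = 3⁻¹ by norm_num, Real.log_inv] at this
    exact this
  -- log (1 - p) ≤ - p
  have hl1p : Real.log (1 - p) ≤ -p := by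
    have := Real.log_le_sub_one_of_pos (x := 1 - p) (by linarith)
    linarith
  -- lower bound for entropy
  have hE : (5 : ℝ) / 2 * p < binEntropy2 p := by
    have key : (5 : ℝ) / 2 * p * Real.log 2 < -p * Real.log p - (1 - p) * Real.log (1 - p) := by
      have h1 : p * Real.log 3 < -p * Real.log p := by nlinarith
      have h2 : p * (1 - p) ≤ -((1 - p) * Real.log (1 - p)) := by nlinarith
      nlinarith
    have : binEntropy2 p = (-p * Real.log p - (1 - p) * Real.log (1 - p)) / Real.log 2 := by
      unfold binEntropy2
      rw [Real.logb, Real.logb]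
      ring
    rw [this, lt_div_iff₀ hlog2pos]
    linarith
  have hfin : (2 + q) * w₂ < (w₁ + w₂) * binEntropy2 p := by
    have hsp : (w₁ + w₂) * p = w₂ := by
      rw [hpdef]; field_simp
    have := mul_lt_mul_of_pos_left hE hs0
    nlinarith
  nlinarith
end

section
/- For every real number $c > 2$, one has $(1+c)\left( h\!\left(\frac{1}{1+c}\right) - \frac{2}{1+c} \right) > \frac{1}{2}$; equivalently, $(1+c)\, h\!\left(\frac{1}{1+c}\right) - 2 > \frac{1}{2}$. -/
private lemma aux_deriv (x : ℝ) (hx : 0 < x) :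
    HasDerivAt (fun y : ℝ => (1 + y) * Real.log (1 + y) - y * Real.log y)
      (Real.log (1 + x) - Real.log x) x := by
  have ha : HasDerivAt (fun y : ℝ => 1 + y) 1 x := (hasDerivAt_id x).const_add 1
  have h1 : HasDerivAt (fun y : ℝ => (1 + y) * Real.log (1 + y))
      (Real.log (1 + x) + 1) x := by
    have := (Real.hasDerivAt_mul_log (by linarith : (1 : ℝ) + x ≠ 0)).comp x ha
    exact this.congr_deriv (by ring)
  have h2 : HasDerivAt (fun y : ℝ => y * Real.log y) (Real.log x + 1) x :=
    Real.hasDerivAt_mul_log (ne_of_gt hx)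
  have := h1.sub h2
  exact this.congr_deriv (by ring)

private lemma aux_key (c : ℝ) (hc : 2 < c) :
    5 / 2 * Real.log 2 < (1 + c) * Real.log (1 + c) - c * Real.log c := by
  set f : ℝ → ℝ := fun y => (1 + y) * Real.log (1 + y) - y * Real.log y with hf
  have hmono : StrictMonoOn f (Set.Ici (2 : ℝ)) := by
    apply strictMonoOn_of_deriv_pos (convex_Ici 2)
    · intro x hx
      exact ((aux_deriv x (by simp at hx; linarith)).continuousAt).continuousWithinAt
    · intro x hx
      rw [interior_Ici] at hx
      simp only [Set.mem_Ioi] at hx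
      rw [(aux_deriv x (by linarith)).deriv]
      have : Real.log x < Real.log (1 + x) := Real.log_lt_log (by linarith) (by linarith)
      linarith
  have h2c : f 2 < f c := hmono (by simp) (by simp; linarith) hc
  have hf2 : f 2 = 3 * Real.log 3 - 2 * Real.log 2 := by
    simp only [hf]
    norm_num
  have h98 : Real.log 8 < Real.log 9 := Real.log_lt_log (by norm_num) (by norm_num)
  have h9 : Real.log 9 = 2 * Real.log 3 := by
    rw [show (9 : ℝ) = 3 ^ 2 by norm_num, Real.log_pow]; push_cast; ring
  have h8 : Real.log 8 = 3 * Real.log 2 := by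
    rw [show (8 : ℝ) = 2 ^ 3 by norm_num, Real.log_pow]; push_cast; ring
  have : 5 / 2 * Real.log 2 < f 2 := by
    rw [hf2]; nlinarith
  calc 5 / 2 * Real.log 2 < f 2 := this
    _ < f c := h2c

theorem stmt_1 (c : ℝ) (hc : 2 < c) :
    (1 + c) * (binEntropy2 (1 / (1 + c)) - 2 / (1 + c)) > 1 / 2 ∧
    (1 + c) * binEntropy2 (1 / (1 + c)) - 2 > 1 / 2 := by
  have hc0 : (0 : ℝ) < c := by linarith
  have h1c : (0 : ℝ) < 1 + c := by linarith
  have hL : (0 : ℝ) < Real.log 2 := Real.log_pos one_lt_two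
  have e1 : (1 : ℝ) - 1 / (1 + c) = c / (1 + c) := by field_simp; ring
  have e2 : Real.log (1 / (1 + c)) = -Real.log (1 + c) := by
    rw [one_div, Real.log_inv]
  have e3 : Real.log (c / (1 + c)) = Real.log c - Real.log (1 + c) :=
    Real.log_div (ne_of_gt hc0) (ne_of_gt h1c)
  have key2 : (1 + c) * binEntropy2 (1 / (1 + c)) =
      ((1 + c) * Real.log (1 + c) - c * Real.log c) / Real.log 2 := by
    unfold binEntropy2 Real.logb
    rw [e1, e2, e3]
    field_simp
    ring
  have hgt : (1 + c) * binEntropy2 (1 / (1 + c)) > 5 / 2 := by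
    rw [key2, gt_iff_lt, lt_div_iff₀ hL]
    linarith [aux_key c hc]
  have hid : (1 + c) * (binEntropy2 (1 / (1 + c)) - 2 / (1 + c)) =
      (1 + c) * binEntropy2 (1 / (1 + c)) - 2 := by
    field_simp
  constructor
  · rw [hid]; linarith
  · linarith
end

section
/- For all real numbers $a, b$ with $0 < b \le a \le 2b$, the inequality $(a + b)\left( 1 - h\!\left(\frac{b}{a + b}\right) \right) \le \frac{1}{4}\,(a - b)$ holds. -/
lemma binEntropy2_eq (x : ℝ) : binEntropy2 x = Real.binEntropy x / Real.log 2 := by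
  simp [binEntropy2, Real.binEntropy, Real.logb, Real.log_inv]
  ring

lemma log2_pos : (0:ℝ) < Real.log 2 := Real.log_pos (by norm_num)

lemma endpoint : (11/12 : ℝ) * Real.log 2 ≤ Real.binEntropy (1/3) := by
  have h3 : Real.binEntropy (1/3 : ℝ) = Real.log 3 - (2/3) * Real.log 2 := by
    rw [Real.binEntropy]
    have : (1:ℝ) - 1/3 = 2/3 := by norm_num
    rw [this]
    rw [show ((1:ℝ)/3)⁻¹ = 3 by norm_num, show ((2:ℝ)/3)⁻¹ = 3/2 by norm_num,
      Real.log_div (by norm_num) (by norm_num)]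
    ring
  rw [h3]
  have key : (19:ℝ) * Real.log 2 ≤ 12 * Real.log 3 := by
    have : Real.log (2^19 : ℝ) ≤ Real.log (3^12 : ℝ) :=
      Real.log_le_log (by positivity) (by norm_num)
    rwa [Real.log_pow, Real.log_pow] at this
  push_cast at key
  linarith

lemma key_ineq {t : ℝ} (h1 : 1/3 ≤ t) (h2 : t ≤ 1/2) :
    1 - binEntropy2 t ≤ (1 - 2*t)/4 := by
  set α : ℝ := (1/2 - t) * 6 with hα
  set β : ℝ := (t - 1/3) * 6 with hβ
  have hα0 : 0 ≤ α := by simp [hα]; linarith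
  have hβ0 : 0 ≤ β := by simp [hβ]; linarith
  have hαβ : α + β = 1 := by simp [hα, hβ]; ring
  have hconc := (Real.strictConcave_binEntropy.concaveOn).2
    (show (1/3:ℝ) ∈ Set.Icc (0:ℝ) 1 by norm_num)
    (show (1/2:ℝ) ∈ Set.Icc (0:ℝ) 1 by norm_num) hα0 hβ0 hαβ
  simp only [smul_eq_mul] at hconc
  have ht : α * (1/3) + β * (1/2) = t := by simp [hα, hβ]; ring
  rw [ht] at hconc
  have hhalf : Real.binEntropy (1/2 : ℝ) = Real.log 2 := by
    rw [show (1/2:ℝ) = 2⁻¹ by norm_num, Real.binEntropy_two_inv]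
  rw [hhalf] at hconc
  have hend := endpoint
  have hbe : α * (11/12 * Real.log 2) + β * Real.log 2 ≤ Real.binEntropy t := by
    calc α * (11/12 * Real.log 2) + β * Real.log 2
        ≤ α * Real.binEntropy (1/3) + β * Real.log 2 := by nlinarith
      _ ≤ _ := hconc
  rw [binEntropy2_eq]
  have hlog := log2_pos
  have h2t : (1 - 2*t) = α/3 := by simp [hα]; linarith
  have hdiv : (1 - α/12) ≤ Real.binEntropy t / Real.log 2 := by
    rw [le_div_iff₀ hlog]; nlinarith
  linarith

theorem stmt_2 (a b : ℝ) (hb : 0 < b) (hba : b ≤ a) (hab : a ≤ 2 * b) :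
    (a + b) * (1 - binEntropy2 (b / (a + b))) ≤ (1 / 4) * (a - b) := by
  have hs : 0 < a + b := by linarith
  set t := b / (a + b) with hT
  have h1 : 1/3 ≤ t := by rw [hT, le_div_iff₀ hs]; linarith
  have h2 : t ≤ 1/2 := by rw [hT, div_le_iff₀ hs]; linarith
  have hk := key_ineq h1 h2
  have ht2 : (a + b) * (1 - 2*t) = a - b := by
    have hb' : t * (a + b) = b := by rw [hT]; field_simp
    nlinarith [hb']
  calc (a + b) * (1 - binEntropy2 t) ≤ (a + b) * ((1 - 2*t)/4) :=
        mul_le_mul_of_nonneg_left hk hs.le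
    _ = (1/4) * (a - b) := by rw [← ht2]; ring
end

section
/- For every real number $x$ with $\frac{1}{2} \le x < 1$, one has $f(x) < \frac{1}{2}$, where $f$ is the piecewise worst-case redundancy function of optimal binary AIFV codes. -/
/-- The piecewise worst-case redundancy function of optimal binary AIFV codes:
`f x = x² - 2x + 2 - h x` for `x ≤ (-1+√5)/2` and
`f x = (-2x² + x + 2)/(1+x) - h x` otherwise. -/
noncomputable def aifvF (x : ℝ) : ℝ :=
  if x ≤ (-1 + Real.sqrt 5) / 2 then
    x ^ 2 - 2 * x + 2 - binEntropy2 x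
  else
    (-2 * x ^ 2 + x + 2) / (1 + x) - binEntropy2 x

lemma binEntropy2_half : binEntropy2 (1/2) = 1 := by
  rw [binEntropy2_eq, show (1:ℝ)/2 = 2⁻¹ by norm_num, Real.binEntropy_two_inv]
  exact div_self (ne_of_gt (Real.log_pos one_lt_two))

lemma chord (x : ℝ) (h₁ : 1/2 < x) (h₂ : x < 1) : 2 * (1 - x) < binEntropy2 x := by
  have hsc := Real.strictConcave_binEntropy
  have key := hsc.2 (show (2:ℝ)⁻¹ ∈ Set.Icc (0:ℝ) 1 by constructor <;> norm_num)
    (show (1:ℝ) ∈ Set.Icc (0:ℝ) 1 by constructor <;> norm_num) (by norm_num)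
    (show (0:ℝ) < 2 * (1 - x) by linarith) (show (0:ℝ) < 2 * x - 1 by linarith)
    (by ring)
  simp only [smul_eq_mul] at key
  have hx : 2 * (1 - x) * (2:ℝ)⁻¹ + (2 * x - 1) * 1 = x := by ring
  rw [hx, Real.binEntropy_two_inv, Real.binEntropy_one, mul_zero, add_zero] at key
  have hlog : (0:ℝ) < Real.log 2 := Real.log_pos one_lt_two
  rw [binEntropy2_eq]
  calc 2 * (1 - x) = 2 * (1 - x) * Real.log 2 / Real.log 2 := by
        field_simp
    _ < Real.binEntropy x / Real.log 2 := by gcongr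

theorem stmt_6 (x : ℝ) (h₁ : 1 / 2 ≤ x) (h₂ : x < 1) : aifvF x < 1 / 2 := by
  rcases eq_or_lt_of_le h₁ with rfl | h₁'
  · have hg : (1:ℝ)/2 ≤ (-1 + Real.sqrt 5) / 2 := by
      nlinarith [Real.sq_sqrt (by norm_num : (5:ℝ) ≥ 0),
        Real.sqrt_nonneg 5]
    rw [aifvF, if_pos hg, binEntropy2_half]
    norm_num
  · have hch := chord x h₁' h₂
    rw [aifvF]
    split_ifs with hg
    · -- x ≤ (√5-1)/2, so x² ≤ 1/2
      have h5 : Real.sqrt 5 ^ 2 = 5 := Real.sq_sqrt (by norm_num)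
      have hs : Real.sqrt 5 ≤ 2.3 := by nlinarith [Real.sqrt_nonneg 5]
      nlinarith
    · have hx1 : (0:ℝ) < 1 + x := by linarith
      rw [div_sub' (ne_of_gt hx1), div_lt_iff₀ hx1]
      nlinarith
end

section
/- For every real number $x$ with $\frac{1}{2} \le x < 1$, one has $f(x) < 2 - x - h(x)$; that is, the worst-case redundancy of optimal binary AIFV codes is strictly smaller than the worst-case redundancy $2 - p_{\max} - h(p_{\max})$ of Huffman codes for every $p_{\max} = x \ge \frac{1}{2}$. -/
theorem stmt_8 (x : ℝ) (h₁ : 1 / 2 ≤ x) (h₂ : x < 1) :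
    aifvF x < 2 - x - binEntropy2 x := by
  unfold aifvF
  have hx0 : 0 < x := by linarith
  split_ifs with hc
  · nlinarith
  · have h1x : 0 < 1 + x := by linarith
    have key : (-2 * x ^ 2 + x + 2) / (1 + x) < 2 - x := by
      rw [div_lt_iff₀ h1x]
      nlinarith
    linarith
end

section
/- For every real number $x$ with $\frac{1}{2} \le x < 1$, one has $\min\{ f(x),\, f_3(x) \} < \frac{1}{3}$. -/
set_option maxHeartbeats 1000000

/-- The redundancy upper bound `f₃` for binary AIFV-3 codes. -/
noncomputable def aifvF3 (x : ℝ) : ℝ :=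
  2 - x - binEntropy2 x
    + (1 + x) / (1 + x + x ^ 2) * (-x + 2 * (1 - x))
    + x ^ 2 / (1 + x + x ^ 2) * (1 - x)

/-- The redundancy upper bound `f₄` for binary AIFV-4 codes. -/
noncomputable def aifvF4 (x : ℝ) : ℝ :=
  2 - x - binEntropy2 x
    + (1 + x) / (1 + x + x ^ 2 + x ^ 3) * (-x + 3 * (1 - x))
    + x ^ 2 / (1 + x + x ^ 2 + x ^ 3) * (-x + 2 * (1 - x))
    + x ^ 3 / (1 + x + x ^ 2 + x ^ 3) * (1 - x)

/-- Padé-type bound: `log y ≤ 2 (y-1)/(y+1)` for `0 < y ≤ 1`. -/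
lemma log_pade {y : ℝ} (h0 : 0 < y) (h1 : y ≤ 1) : Real.log y ≤ 2*(y-1)/(y+1) := by
  set F : ℝ → ℝ := fun t => 2*(t-1)/(t+1) - Real.log t with hF
  have hder : ∀ t : ℝ, 0 < t → HasDerivAt F (4/(t+1)^2 - 1/t) t := by
    intro t ht
    have h1' : HasDerivAt (fun s : ℝ => 2*(s-1)) 2 t := by
      simpa using ((hasDerivAt_id t).sub_const 1).const_mul 2
    have h2' : HasDerivAt (fun s : ℝ => s+1) 1 t := (hasDerivAt_id t).add_const 1
    have h3 := h1'.div h2' (by positivity)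
    have h4 := Real.hasDerivAt_log (ne_of_gt ht)
    have := h3.sub h4
    have ht' : t ≠ 0 := ne_of_gt ht
    refine this.congr_deriv ?_
    ring
  have anti : AntitoneOn F (Set.Icc y 1) := by
    apply antitoneOn_of_deriv_nonpos (convex_Icc y 1)
    · intro t ht
      exact (hder t (lt_of_lt_of_le h0 ht.1)).continuousAt.continuousWithinAt
    · intro t ht
      rw [interior_Icc] at ht
      exact (hder t (lt_of_lt_of_le h0 ht.1.le)).differentiableAt.differentiableWithinAt
    · intro t ht
      rw [interior_Icc] at ht
      have htpos : 0 < t := lt_of_lt_of_le h0 ht.1.le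
      rw [(hder t htpos).deriv]
      have : 4/(t+1)^2 ≤ 1/t := by
        rw [div_le_div_iff₀ (by positivity) htpos]
        nlinarith [sq_nonneg (t-1)]
      linarith
  have := anti ⟨le_refl y, h1⟩ ⟨h1, le_refl 1⟩ h1
  simp only [hF, Real.log_one] at this
  norm_num at this
  linarith [this]

/-- Lower bound for the binary entropy (times `log 2`):
`6 x (1-x) / ((1+x)(2-x)) ≤ h(x) · log 2`. -/
lemma ent_mul {x : ℝ} (h0 : 0 < x) (h1 : x < 1) :
    6*x*(1-x)/((1+x)*(2-x)) ≤ binEntropy2 x * Real.log 2 := by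
  have hL : (0:ℝ) < Real.log 2 := Real.log_pos (by norm_num)
  have e : binEntropy2 x * Real.log 2
      = -(x*Real.log x) - (1-x)*Real.log (1-x) := by
    unfold binEntropy2
    simp only [Real.logb]
    field_simp
  rw [e]
  have t1 : Real.log x ≤ 2*(x-1)/(x+1) := log_pade h0 h1.le
  have t2 : Real.log (1-x) ≤ 2*((1-x)-1)/((1-x)+1) := log_pade (by linarith) (by linarith)
  have m1 : x * Real.log x ≤ x * (2*(x-1)/(x+1)) := mul_le_mul_of_nonneg_left t1 h0.le
  have m2 : (1-x) * Real.log (1-x) ≤ (1-x) * (2*((1-x)-1)/((1-x)+1)) :=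
    mul_le_mul_of_nonneg_left t2 (by linarith)
  have key1 : x * (2*(x-1)/(x+1)) = -(2*x*(1-x)/(x+1)) := by ring
  have key2 : (1-x) * (2*((1-x)-1)/((1-x)+1)) = -(2*x*(1-x)/(1-x+1)) := by ring
  have key3 : 2*x*(1-x)/(x+1) + 2*x*(1-x)/(1-x+1) = 6*x*(1-x)/((1+x)*(2-x)) := by
    have hx1 : (x:ℝ)+1 ≠ 0 := by linarith
    have hx2 : (1:ℝ)-x+1 ≠ 0 := by linarith
    have hx3 : (1:ℝ)+x ≠ 0 := by linarith
    have hx4 : (2:ℝ)-x ≠ 0 := by linarith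
    field_simp
    ring
  linarith

theorem stmt_9 (x : ℝ) (h₁ : 1 / 2 ≤ x) (h₂ : x < 1) :
    min (aifvF x) (aifvF3 x) < 1 / 3 := by
  have hL : (0:ℝ) < Real.log 2 := Real.log_pos (by norm_num)
  have hLu : Real.log 2 < 0.6931471808 := Real.log_two_lt_d9
  rcases le_or_gt x (7/8) with hx78 | hx78
  · -- use aifvF
    have hD : (0:ℝ) < (1+x)*(2-x) := by nlinarith
    have hent := ent_mul (by linarith : (0:ℝ) < x) h₂
    apply lt_of_le_of_lt (min_le_left _ _)
    unfold aifvF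
    split_ifs with hg
    · -- x ≤ (-1+√5)/2, so x ≤ 0.618034
      have h5u : Real.sqrt 5 < 2.236068 := by
        nlinarith [Real.sq_sqrt (show (0:ℝ) ≤ 5 by norm_num), Real.sqrt_nonneg 5]
      have hxu : x ≤ 0.618034 := by
        linarith [hg, h5u]
      have step : (x^2 - 2*x + 5/3) * Real.log 2 < 6*x*(1-x)/((1+x)*(2-x)) := by
        rw [lt_div_iff₀ hD]
        have hpos : (0:ℝ) < x^2 - 2*x + 5/3 := by nlinarith
        nlinarith [mul_pos hpos hD, sq_nonneg (x - 1/2), sq_nonneg (x - 0.618034),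
          mul_nonneg (sub_nonneg.mpr h₁) (sub_nonneg.mpr hxu)]
      have : (x^2 - 2*x + 5/3) * Real.log 2 < binEntropy2 x * Real.log 2 :=
        lt_of_lt_of_le step hent
      have := (mul_lt_mul_iff_of_pos_right hL).mp this
      linarith
    · -- x > (-1+√5)/2 > 0.618
      have h5l : (2.236:ℝ) < Real.sqrt 5 := by
        nlinarith [Real.sq_sqrt (show (0:ℝ) ≤ 5 by norm_num), Real.sqrt_nonneg 5]
      push_neg at hg
      have hxl : (0.618:ℝ) < x := by linarith
      have hx1 : (0:ℝ) < 1 + x := by linarith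
      have e2 : (-2*x^2+x+2)/(1+x) - 1/3 = (-6*x^2+2*x+5)/(3*(1+x)) := by
        field_simp
        ring
      have step : ((-6*x^2+2*x+5)/(3*(1+x))) * Real.log 2 < 6*x*(1-x)/((1+x)*(2-x)) := by
        rw [div_mul_eq_mul_div, div_lt_div_iff₀ (by positivity) hD]
        have hnum : (0:ℝ) < -6*x^2+2*x+5 := by nlinarith
        nlinarith [mul_pos hnum hD, mul_pos (mul_pos hnum hx1) (show (0:ℝ) < 2 - x by linarith),
          sq_nonneg (x - 0.75), mul_nonneg (sub_pos.mpr hxl).le (sub_nonneg.mpr hx78)]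
      have : ((-6*x^2+2*x+5)/(3*(1+x))) * Real.log 2 < binEntropy2 x * Real.log 2 :=
        lt_of_lt_of_le step hent
      have hfrac := (mul_lt_mul_iff_of_pos_right hL).mp this
      have goal2 : (-2 * x ^ 2 + x + 2) / (1 + x) - 1/3 < binEntropy2 x := by
        rw [show (-2 * x ^ 2 + x + 2) = (-2*x^2+x+2) by ring] at *
        linarith [e2]
      linarith
  · -- use aifvF3
    apply lt_of_le_of_lt (min_le_right _ _)
    unfold aifvF3
    have hd : (0:ℝ) < 1 + x + x^2 := by nlinarith
    have key : 2 - x + (1 + x) / (1 + x + x ^ 2) * (-x + 2 * (1 - x))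
        + x ^ 2 / (1 + x + x ^ 2) * (1 - x) - 1/3
        = (1-x)*(6*x^2+10*x+11)/(3*(1+x+x^2)) := by
      field_simp
      ring
    -- entropy lower bound
    have hL1 : Real.log x ≤ x - 1 := Real.log_le_sub_one_of_pos (by linarith)
    have hL2 : Real.log (1-x) ≤ -(3*Real.log 2) := by
      have h18 : Real.log (1-x) ≤ Real.log (1/8) := by
        apply Real.log_le_log (by linarith)
        linarith
      have e8 : Real.log ((1:ℝ)/8) = -(3*Real.log 2) := by
        rw [show (1:ℝ)/8 = ((2:ℝ)^(3:ℕ))⁻¹ by norm_num, Real.log_inv, Real.log_pow]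
        push_cast
        ring
      linarith [e8 ▸ h18]
    have eh : binEntropy2 x * Real.log 2 = -(x*Real.log x) - (1-x)*Real.log (1-x) := by
      unfold binEntropy2
      simp only [Real.logb]
      field_simp
    have m1 : x * Real.log x ≤ x * (x-1) := mul_le_mul_of_nonneg_left hL1 (by linarith)
    have m2 : (1-x) * Real.log (1-x) ≤ (1-x) * (-(3*Real.log 2)) :=
      mul_le_mul_of_nonneg_left hL2 (by linarith)
    have hlb : x*(1-x) + 3*(1-x)*Real.log 2 ≤ binEntropy2 x * Real.log 2 := by
      rw [eh]; nlinarith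
    have step : ((1-x)*(6*x^2+10*x+11)/(3*(1+x+x^2))) * Real.log 2
        < x*(1-x) + 3*(1-x)*Real.log 2 := by
      rw [div_mul_eq_mul_div, div_lt_iff₀ (by positivity)]
      have hA : (0:ℝ) ≤ (1-x)*(3*x+2) := by nlinarith
      have aux : Real.log 2 * ((1-x)*(3*x+2)) < 3*x*(1+x+x^2) := by
        have h1' : Real.log 2 * ((1-x)*(3*x+2)) ≤ 0.6931471808 * ((1-x)*(3*x+2)) :=
          mul_le_mul_of_nonneg_right hLu.le hA
        nlinarith [h1']
      have core : (6*x^2+10*x+11) * Real.log 2 < (x + 3*Real.log 2) * (3*(1+x+x^2)) := by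
        nlinarith [aux]
      nlinarith [mul_lt_mul_of_pos_left core (show (0:ℝ) < 1-x by linarith)]
    have : ((1-x)*(6*x^2+10*x+11)/(3*(1+x+x^2))) * Real.log 2 < binEntropy2 x * Real.log 2 :=
      lt_of_lt_of_le step hlb
    have hfrac := (mul_lt_mul_iff_of_pos_right hL).mp this
    linarith [key]
end

section
/- Let $s \ge 1$ be a natural number, let $\delta \in [0, 1)$, and let $a_1, \dots, a_s$ be non-negative real numbers satisfying the cyclic inequalities $a_{n+1} \ge (1-\delta)\, a_n$ for $1 \le n \le s-1$ and $a_1 \ge (1-\delta)\, a_s$. Then for every index $n \in \{1, \dots, s\}$, $a_n \ge \dfrac{\sum_{j=1}^{s} a_j}{\sum_{k=1}^{s} (1-\delta)^{k-s}}$. -/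
/-- Cyclic-loop lower bound on stationary probabilities: if `a 0, …, a (s-1)` are
nonnegative reals with `a (n+1) ≥ (1-δ) * a n` cyclically (including
`a 0 ≥ (1-δ) * a (s-1)`), then each `a n` is at least the total sum divided by
`∑_{k=1}^{s} (1-δ)^(k-s)`. Here `a (n-1)` plays the role of the paper's `a_n`. -/
theorem stmt_13 (s : ℕ) (hs : 1 ≤ s) (δ : ℝ) (hδ0 : 0 ≤ δ) (hδ1 : δ < 1)
    (a : ℕ → ℝ) (ha : ∀ n < s, 0 ≤ a n)
    (hstep : ∀ n, n + 1 < s → (1 - δ) * a n ≤ a (n + 1))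
    (hcyc : (1 - δ) * a (s - 1) ≤ a 0) :
    ∀ n < s, (∑ j ∈ Finset.range s, a j) /
        (∑ k ∈ Finset.range s, (1 - δ) ^ (((k : ℤ) + 1) - (s : ℤ))) ≤ a n := by
  intro n hn
  set c : ℝ := 1 - δ with hc
  have hc0 : 0 < c := by simp [hc]; linarith
  -- forward chain
  have hchain : ∀ d i, i + d < s → c ^ d * a i ≤ a (i + d) := by
    intro d
    induction d with
    | zero => intro i hi; simp
    | succ d ih =>
      intro i hi
      have h1 : c ^ d * a i ≤ a (i + d) := ih i (by omega)
      calc c ^ (d + 1) * a i = c * (c ^ d * a i) := by ring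
        _ ≤ c * a (i + d) := by
          exact mul_le_mul_of_nonneg_left h1 (le_of_lt hc0)
        _ ≤ a (i + d + 1) := hstep (i + d) (by omega)
  -- cyclic distance function
  set d : ℕ → ℕ := fun j => if j ≤ n then n - j else n + (s - j) with hd
  have hds : ∀ j < s, d j < s := by
    intro j hj; simp only [hd]; split <;> omega
  have hkey : ∀ j < s, c ^ (d j) * a j ≤ a n := by
    intro j hj
    simp only [hd]
    split
    · next h =>
      have := hchain (n - j) j (by omega)
      rwa [show j + (n - j) = n by omega] at this
    · next h =>
      push_neg at h
      have h1 : c ^ (s - 1 - j) * a j ≤ a (s - 1) := by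
        have := hchain (s - 1 - j) j (by omega)
        rwa [show j + (s - 1 - j) = s - 1 by omega] at this
      have h2 : c ^ (s - j) * a j ≤ a 0 := by
        calc c ^ (s - j) * a j = c * (c ^ (s - 1 - j) * a j) := by
              rw [← mul_assoc, ← pow_succ']
              congr 2
              omega
          _ ≤ c * a (s - 1) := mul_le_mul_of_nonneg_left h1 (le_of_lt hc0)
          _ ≤ a 0 := hcyc
      have h3 : c ^ n * a 0 ≤ a n := by
        have := hchain n 0 (by omega)
        simpa using this
      calc c ^ (n + (s - j)) * a j = c ^ n * (c ^ (s - j) * a j) := by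
            rw [← mul_assoc, ← pow_add]
        _ ≤ c ^ n * a 0 := mul_le_mul_of_nonneg_left h2 (pow_nonneg (le_of_lt hc0) n)
        _ ≤ a n := h3
  have hbound : ∀ j < s, a j ≤ a n * (c⁻¹) ^ (d j) := by
    intro j hj
    have hk := hkey j hj
    have hp : (0:ℝ) < c ^ (d j) := pow_pos hc0 _
    rw [inv_pow, ← div_eq_mul_inv, le_div_iff₀ hp, mul_comm]
    exact hk
  -- d is an involution on range s
  have hinv : ∀ j < s, d (d j) = j := by
    intro j hj
    simp only [hd]
    split
    · next h => split <;> omega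
    · next h => split <;> omega
  have hsum_d : ∑ j ∈ Finset.range s, (c⁻¹) ^ (d j) = ∑ k ∈ Finset.range s, (c⁻¹) ^ k := by
    apply Finset.sum_nbij' (i := d) (j := d)
    · intro j hj; exact Finset.mem_range.mpr (hds j (Finset.mem_range.mp hj))
    · intro j hj; exact Finset.mem_range.mpr (hds j (Finset.mem_range.mp hj))
    · intro j hj; exact hinv j (Finset.mem_range.mp hj)
    · intro j hj; exact hinv j (Finset.mem_range.mp hj)
    · intro j hj; rfl
  -- the denominator equals ∑ (c⁻¹)^k
  have hD : (∑ k ∈ Finset.range s, c ^ (((k : ℤ) + 1) - (s : ℤ)))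
      = ∑ k ∈ Finset.range s, (c⁻¹) ^ k := by
    rw [← Finset.sum_range_reflect (fun k => (c⁻¹) ^ k) s]
    apply Finset.sum_congr rfl
    intro k hk
    have hk' : k < s := Finset.mem_range.mp hk
    have : ((k : ℤ) + 1) - (s : ℤ) = -((s - 1 - k : ℕ) : ℤ) := by
      push_cast [Nat.cast_sub (by omega : k ≤ s - 1), Nat.cast_sub (by omega : 1 ≤ s)]
      ring
    rw [this, zpow_neg, zpow_natCast, inv_pow]
  have hDpos : 0 < ∑ k ∈ Finset.range s, c ^ (((k : ℤ) + 1) - (s : ℤ)) := by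
    apply Finset.sum_pos
    · intro k _; exact zpow_pos hc0 _
    · exact Finset.nonempty_range_iff.mpr (by omega)
  rw [div_le_iff₀ hDpos, hD, ← hsum_d, Finset.mul_sum]
  apply Finset.sum_le_sum
  intro j hj
  exact hbound j (Finset.mem_range.mp hj)
end
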